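/- If the entire function f is not identically zero, then the Lisbon integral Φ_f is not identically zero as a function on ℂ^k, and likewise Ψ_f is not identically zero on ℂ^k. -/

import Mathlib

open Matrix Complex

noncomputable section

/-- The universal monic polynomial `P_s(z) = Σ_{h=0}^{k} (−1)^h s_h z^{k−h}` (with `s_0 = 1`),
where `s i` represents the `(i+1)`-st coefficient `s_{i+1}`. -/
def LP (k : ℕ) (s : Fin k → ℂ) (z : ℂ) : ℂ :=
  z ^ k + ∑ i : Fin k, (-1 : ℂ) ^ ((i : ℕ) + 1) * s i * z ^ (k - 1 - (i : ℕ))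

/-- The derivative `P'_s(z) = Σ_{h=0}^{k−1} (−1)^h (k−h) s_h z^{k−h−1}` (with `s_0 = 1`). -/
def LP' (k : ℕ) (s : Fin k → ℂ) (z : ℂ) : ℂ :=
  (k : ℂ) * z ^ (k - 1) +
    ∑ i : Fin k, (-1 : ℂ) ^ ((i : ℕ) + 1) * ((k - 1 - (i : ℕ) : ℕ) : ℂ) * s i *
      z ^ (k - 2 - (i : ℕ))

lemma myCircleIntegral_add {f g : ℂ → ℂ} {c : ℂ} {R : ℝ}
    (hf : CircleIntegrable f c R) (hg : CircleIntegrable g c R) :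
    (∮ z in C(c, R), (f z + g z)) = (∮ z in C(c, R), f z) + ∮ z in C(c, R), g z := by
  simp only [circleIntegral, smul_add,
    intervalIntegral.integral_add ((circleIntegrable_iff R).1 hf) ((circleIntegrable_iff R).1 hg)]

/-- if the entire function `f` is not identically zero then neither `Φ_f`
nor `Ψ_f` is identically zero on `ℂ^k`. -/
theorem lisbon_Phi_Psi_nonzero
    (k : ℕ) (hk : 2 ≤ k) (f : ℂ → ℂ) (hf : Differentiable ℂ f)
    (hf0 : ∃ w : ℂ, f w ≠ 0)
    (Φ Ψ : (Fin k → ℂ) → Fin k → ℂ)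
    (hΦ : ∀ (s : Fin k → ℂ) (R : ℝ), 0 < R →
      (∀ z : ℂ, LP k s z = 0 → ‖z‖ < R) →
      ∀ h : Fin k,
        Φ s h = (2 * Real.pi * Complex.I)⁻¹ *
          ∮ ζ in C(0, R), f ζ * ζ ^ (h : ℕ) / LP k s ζ)
    (hΨ : ∀ (s : Fin k → ℂ) (R : ℝ), 0 < R →
      (∀ z : ℂ, LP k s z = 0 → ‖z‖ < R) →
      ∀ h : Fin k,
        Ψ s h = (2 * Real.pi * Complex.I)⁻¹ *
          ∮ ζ in C(0, R), f ζ * ζ ^ (h : ℕ) * LP' k s ζ / LP k s ζ) :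
    (∃ s : Fin k → ℂ, Φ s ≠ 0) ∧ (∃ s : Fin k → ℂ, Ψ s ≠ 0) := by
  -- find a nonzero point where f is nonzero
  obtain ⟨w, hw0, hw⟩ : ∃ w : ℂ, w ≠ 0 ∧ f w ≠ 0 := by
    by_contra hcon
    push_neg at hcon
    obtain ⟨w₀, hw₀⟩ := hf0
    have h0 : w₀ = 0 := by
      by_contra h; exact hw₀ (hcon w₀ h)
    subst h0
    have h1 : Filter.Tendsto f (nhdsWithin 0 {(0:ℂ)}ᶜ) (nhds (f 0)) :=
      (hf.continuous.continuousAt).continuousWithinAt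
    have h2 : Filter.Tendsto f (nhdsWithin 0 {(0:ℂ)}ᶜ) (nhds 0) := by
      refine Filter.Tendsto.congr' ?_ tendsto_const_nhds
      filter_upwards [self_mem_nhdsWithin] with z hz
      exact (hcon z hz).symm
    exact hw₀ (tendsto_nhds_unique h1 h2)
  obtain ⟨m, rfl⟩ : ∃ m, k = m + 2 := ⟨k - 2, by omega⟩
  set s : Fin (m+2) → ℂ := fun i => if i = 0 then w else 0 with hs
  have hLP : ∀ z : ℂ, LP (m+2) s z = z ^ (m+1) * (z - w) := by
    intro z
    have : (∑ i : Fin (m+2), (-1 : ℂ) ^ ((i : ℕ) + 1) * s i * z ^ (m + 2 - 1 - (i : ℕ)))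
        = -(w * z ^ (m+1)) := by
      rw [Finset.sum_eq_single (0 : Fin (m+2))]
      · simp [hs]
      · intro b _ hb; simp [hs, hb]
      · simp
    simp only [LP, this]; ring
  have hLP' : ∀ z : ℂ, LP' (m+2) s z = z ^ m * ((m+2 : ℂ) * z - (m+1 : ℂ) * w) := by
    intro z
    have : (∑ i : Fin (m+2), (-1 : ℂ) ^ ((i : ℕ) + 1) * ((m + 2 - 1 - (i : ℕ) : ℕ) : ℂ) * s i
          * z ^ (m + 2 - 2 - (i : ℕ))) = -((m+1 : ℂ) * w * z ^ m) := by
      rw [Finset.sum_eq_single (0 : Fin (m+2))]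
      · push_cast [Nat.cast_sub]; simp [hs]; ring
      · intro b _ hb; simp [hs, hb]
      · simp
    simp only [LP', this]; push_cast; ring
  set R : ℝ := ‖w‖ + 1 with hRdef
  have hRpos : 0 < R := by positivity
  have hwR : ‖w‖ < R := by rw [hRdef]; linarith
  have hroots : ∀ z : ℂ, LP (m+2) s z = 0 → ‖z‖ < R := by
    intro z hz
    rw [hLP] at hz
    rcases mul_eq_zero.1 hz with h | h
    · have hz0 : z = 0 := pow_eq_zero_iff (by omega) |>.1 h
      simpa [hz0] using hRpos
    · have hzw : z = w := sub_eq_zero.1 h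
      simpa [hzw] using hwR
  have hball : w ∈ Metric.ball (0:ℂ) R := by
    simpa [Complex.dist_eq] using hwR
  have hsph : ∀ ζ ∈ Metric.sphere (0:ℂ) R, ζ ≠ 0 ∧ ζ ≠ w := by
    intro ζ hζ
    have habs : ‖ζ‖ = R := by
      simpa using hζ
    constructor
    · intro h; rw [h] at habs; simp at habs; linarith
    · intro h; rw [h] at habs; linarith
  have hcauchy : (∮ ζ in C(0, R), (ζ - w)⁻¹ • f ζ) = (2 * Real.pi * Complex.I) • f w :=
    (hf.diffContOnCl).circleIntegral_sub_inv_smul hball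
  have hΦval : Φ s ⟨m+1, by omega⟩ = f w := by
    rw [hΦ s R hRpos hroots ⟨m+1, by omega⟩]
    have hcong : (∮ ζ in C(0,R), f ζ * ζ ^ ((⟨m+1, by omega⟩ : Fin (m+2)) : ℕ) / LP (m+2) s ζ)
        = ∮ ζ in C(0,R), (ζ - w)⁻¹ • f ζ := by
      refine circleIntegral.integral_congr hRpos.le ?_
      intro ζ hζ
      obtain ⟨hζ0, hζw⟩ := hsph ζ hζ
      have h1 : ζ ^ (m+1) ≠ 0 := pow_ne_zero _ hζ0
      have h2 : ζ - w ≠ 0 := sub_ne_zero.2 hζw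
      show f ζ * ζ ^ (m+1) / LP (m+2) s ζ = (ζ - w)⁻¹ • f ζ
      rw [hLP]
      simp only [smul_eq_mul]
      field_simp
    rw [hcong, hcauchy, smul_eq_mul, ← mul_assoc, inv_mul_cancel₀ two_pi_I_ne_zero, one_mul]
  have hΨval : Ψ s ⟨1, by omega⟩ = w * f w := by
    rw [hΨ s R hRpos hroots ⟨1, by omega⟩]
    have hcong : (∮ ζ in C(0,R),
          f ζ * ζ ^ ((⟨1, by omega⟩ : Fin (m+2)) : ℕ) * LP' (m+2) s ζ / LP (m+2) s ζ)
        = ∮ ζ in C(0,R), (((m:ℂ)+2) • f ζ + w • ((ζ - w)⁻¹ • f ζ)) := by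
      refine circleIntegral.integral_congr hRpos.le ?_
      intro ζ hζ
      obtain ⟨hζ0, hζw⟩ := hsph ζ hζ
      have h1 : ζ ^ (m+1) ≠ 0 := pow_ne_zero _ hζ0
      have h2 : ζ - w ≠ 0 := sub_ne_zero.2 hζw
      show f ζ * ζ ^ 1 * LP' (m+2) s ζ / LP (m+2) s ζ = _
      rw [hLP, hLP']
      simp only [smul_eq_mul]
      field_simp
      ring
    have hint1 : CircleIntegrable (fun ζ : ℂ => ((m:ℂ)+2) • f ζ) 0 R :=
      ContinuousOn.circleIntegrable hRpos.le (f := fun ζ : ℂ => ((m:ℂ)+2) • f ζ)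
        (hf.continuous.const_smul ((m:ℂ)+2)).continuousOn
    have hint2 : CircleIntegrable (fun ζ : ℂ => w • ((ζ - w)⁻¹ • f ζ)) 0 R := by
      refine ContinuousOn.circleIntegrable hRpos.le ?_
      refine ContinuousOn.const_smul ?_ w
      refine ContinuousOn.smul (f := fun ζ : ℂ => (ζ - w)⁻¹) ?_ hf.continuous.continuousOn
      refine ContinuousOn.inv₀ ((continuousOn_id.sub continuousOn_const)) ?_
      exact fun ζ hζ => sub_ne_zero.2 (hsph ζ hζ).2
    have hzero : (∮ ζ in C(0,R), ((m:ℂ)+2) • f ζ) = 0 := by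
      refine Complex.circleIntegral_eq_zero_of_differentiable_on_off_countable hRpos.le
        Set.countable_empty ((hf.continuous.const_smul ((m:ℂ)+2)).continuousOn) ?_
      exact fun z _ => (hf z).const_smul ((m:ℂ)+2)
    rw [hcong, myCircleIntegral_add hint1 hint2, hzero, zero_add,
      circleIntegral.integral_smul, hcauchy]
    simp only [smul_eq_mul]
    rw [show (2*(Real.pi:ℂ)*I)⁻¹ * (w * (2*(Real.pi:ℂ)*I * f w))
        = w * f w * ((2*(Real.pi:ℂ)*I)⁻¹ * (2*(Real.pi:ℂ)*I)) from by ring,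
      inv_mul_cancel₀ two_pi_I_ne_zero, mul_one]
  constructor
  · refine ⟨s, fun hcontra => hw ?_⟩
    have := congrFun hcontra ⟨m+1, by omega⟩
    rw [hΦval] at this
    simpa using this
  · refine ⟨s, fun hcontra => mul_ne_zero hw0 hw ?_⟩
    have := congrFun hcontra ⟨1, by omega⟩
    rw [hΨval] at this
    simpa using this
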